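/- Let α, β be real numbers with 0 < α < β and α + β < 1. Then (β−α)·n·C(n, ⌊αn⌋−1) = o(C(n+1, ⌊βn⌋+1)) as n → ∞; that is, the ratio ((β−α)·n·C(n, ⌊αn⌋−1)) / C(n+1, ⌊βn⌋+1), viewed as a real number, tends to 0 as n → ∞. -/

import Mathlib

open Filter

lemma my_choose_mono_aux {N : ℕ} : ∀ (d x : ℕ), 2 * (x + d) ≤ N →
    N.choose x ≤ N.choose (x + d) := by
  intro d
  induction d with
  | zero => intro x _; simp
  | succ d ih =>
    intro x h
    have h1 : N.choose x ≤ N.choose (x + d) := ih x (by omega)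
    have h2 : x + d < N / 2 := by
      have : (x + d + 1) * 2 ≤ N := by omega
      have := (Nat.le_div_iff_mul_le (by norm_num : 0 < 2)).2 this
      omega
    exact h1.trans (Nat.choose_le_succ_of_lt_half_left h2)

lemma my_choose_mono {N a b : ℕ} (hab : a ≤ b) (h : a + b ≤ N) :
    N.choose a ≤ N.choose b := by
  rcases le_or_gt (2 * b) N with h2 | h2
  · have := my_choose_mono_aux (N := N) (b - a) a (by omega)
    simpa [Nat.add_sub_cancel' hab] using this
  · have hbN : b ≤ N := by omega
    have hsymm : N.choose (N - b) = N.choose b := Nat.choose_symm hbN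
    rw [← hsymm]
    have := my_choose_mono_aux (N := N) (N - b - a) a (by omega)
    simpa [Nat.add_sub_cancel' (show a ≤ N - b by omega)] using this

lemma my_choose_geom {c : ℝ} (hc : 0 ≤ c) (n k : ℕ) :
    ∀ s : ℕ, (∀ i, k ≤ i → i < k + s → c * (i + 1) ≤ (n : ℝ) - i) →
      c ^ s * (n.choose k : ℝ) ≤ (n.choose (k + s) : ℝ) := by
  intro s
  induction s with
  | zero => intro _; simp
  | succ s ih =>
    intro h
    have ih' := ih (fun i hi hi' => h i hi (by omega))
    set i := k + s with hi
    have hcond : c * (i + 1) ≤ (n : ℝ) - i := h i (by omega) (by omega)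
    have hin : i ≤ n := by
      by_contra hcon
      push_neg at hcon
      have : (n : ℝ) - i < 0 := by
        have : (n : ℝ) < i := by exact_mod_cast hcon
        linarith
      nlinarith [mul_nonneg hc (by positivity : (0:ℝ) ≤ (i:ℝ) + 1)]
    have hkey : c * (n.choose i : ℝ) ≤ (n.choose (i + 1) : ℝ) := by
      have hid : (n.choose (i + 1) : ℝ) * (i + 1) = (n.choose i : ℝ) * ((n : ℝ) - i) := by
        have := Nat.choose_succ_right_eq n i
        have hcast : ((n - i : ℕ) : ℝ) = (n : ℝ) - i := by
          rw [Nat.cast_sub hin]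
        calc (n.choose (i + 1) : ℝ) * (i + 1)
            = ((n.choose (i + 1) * (i + 1) : ℕ) : ℝ) := by push_cast; ring
          _ = ((n.choose i * (n - i) : ℕ) : ℝ) := by rw [this]
          _ = (n.choose i : ℝ) * ((n : ℝ) - i) := by push_cast [hcast]; ring
      have hip : (0 : ℝ) < (i : ℝ) + 1 := by positivity
      rw [← mul_le_mul_iff_left₀ hip]
      calc c * (n.choose i : ℝ) * ((i : ℝ) + 1)
          = (n.choose i : ℝ) * (c * ((i : ℝ) + 1)) := by ring
        _ ≤ (n.choose i : ℝ) * ((n : ℝ) - i) := by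
            apply mul_le_mul_of_nonneg_left hcond (by positivity)
        _ = (n.choose (i + 1) : ℝ) * ((i : ℝ) + 1) := hid.symm
    calc c ^ (s + 1) * (n.choose k : ℝ) = c * (c ^ s * (n.choose k : ℝ)) := by ring
      _ ≤ c * (n.choose i : ℝ) := mul_le_mul_of_nonneg_left ih' hc
      _ ≤ (n.choose (i + 1) : ℝ) := hkey

set_option maxHeartbeats 1000000

/-- For `0 < α < β` with `α + β < 1`, we have
`(β−α)·n·C(n,⌊αn⌋−1) = o(C(n+1,⌊βn⌋+1))` as `n → ∞`: the ratio tends to `0`. -/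
theorem percentile_residual_term_negligible (α β : ℝ)
    (hα : 0 < α) (hαβ : α < β) (hsum : α + β < 1) :
    Tendsto (fun n : ℕ =>
        ((β - α) * n * (n.choose (⌊α * n⌋₊ - 1) : ℝ))
          / ((n + 1).choose (⌊β * n⌋₊ + 1) : ℝ))
      atTop (nhds 0) := by
  set δ : ℝ := min (β - α) (1 - α - β) with hδdef
  have hδ : 0 < δ := by
    apply lt_min <;> linarith
  set ε : ℝ := δ / 2 with hεdef
  have hε : 0 < ε := by positivity
  set γ : ℝ := α + ε with hγdef
  have hγ0 : 0 < γ := by positivity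
  have hγβ : γ < β := by
    have : δ ≤ β - α := min_le_left _ _
    simp only [hγdef, hεdef]; linarith
  have hγ1β : γ < 1 - β := by
    have : δ ≤ 1 - α - β := min_le_right _ _
    simp only [hγdef, hεdef]; linarith
  have hγhalf : γ < 1 / 2 := by linarith
  set c : ℝ := ((1 - γ) / γ + 1) / 2 with hcdef
  have hratio : 1 < (1 - γ) / γ := by
    rw [lt_div_iff₀ hγ0]; linarith
  have hc1 : 1 < c := by simp only [hcdef]; linarith
  have hc0 : 0 ≤ c := by linarith
  have hcγ : c * γ < 1 - γ := by
    have : c < (1 - γ) / γ := by simp only [hcdef]; linarith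
    calc c * γ < (1 - γ) / γ * γ := by
          exact mul_lt_mul_of_pos_right this hγ0
      _ = 1 - γ := by field_simp
  -- the dominating sequence
  set r : ℝ := c ^ (-ε) with hrdef
  have hr0 : 0 < r := Real.rpow_pos_of_pos (by linarith) _
  have hr1 : r < 1 := Real.rpow_lt_one_of_one_lt_of_neg hc1 (by linarith)
  have hg : Tendsto (fun n : ℕ => (β - α) * ((n : ℝ) * r ^ n)) atTop (nhds 0) := by
    have hsum' : Summable (fun n : ℕ => (n : ℝ) ^ 1 * r ^ n) :=
      summable_pow_mul_geometric_of_norm_lt_one 1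
        (by rwa [Real.norm_eq_abs, abs_of_pos hr0])
    have := hsum'.tendsto_atTop_zero
    simp only [pow_one] at this
    simpa using (this.const_mul (β - α))
  apply squeeze_zero' ?_ ?_ hg
  · -- nonnegativity, eventually
    filter_upwards [eventually_ge_atTop 0] with n _
    exact div_nonneg (mul_nonneg (mul_nonneg (by linarith) (Nat.cast_nonneg _))
      (Nat.cast_nonneg _)) (Nat.cast_nonneg _)
  · -- the main bound, eventually
    have hlin : ∀ (a b : ℝ), 0 < a → ∀ᶠ n : ℕ in atTop, b ≤ a * n := by
      intro a b ha
      have : Tendsto (fun n : ℕ => a * n) atTop atTop :=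
        (tendsto_natCast_atTop_atTop).const_mul_atTop ha
      exact this.eventually_ge_atTop b
    filter_upwards [hlin (β - γ) 2 (by linarith), hlin (1 - β - γ) 2 (by linarith),
        hlin ((1 - γ) - c * γ) c (by linarith), eventually_ge_atTop 1,
        (hlin (1 - γ) 2 (by linarith))] with n h1 h2 h3 hn1 h4
    have hn0 : (0 : ℝ) < n := by exact_mod_cast hn1
    set k : ℕ := ⌊α * n⌋₊ - 1 with hkdef
    set m : ℕ := ⌊β * n⌋₊ + 1 with hmdef
    set s : ℕ := ⌈ε * n⌉₊ with hsdef
    have hkle : (k : ℝ) ≤ α * n := by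
      have h1' : (⌊α * n⌋₊ : ℝ) ≤ α * n := Nat.floor_le (mul_nonneg hα.le (Nat.cast_nonneg n))
      have : (k : ℝ) ≤ (⌊α * n⌋₊ : ℝ) := by exact_mod_cast Nat.sub_le _ _
      linarith
    have hsle : (s : ℝ) ≤ ε * n + 1 := by
      have := Nat.ceil_lt_add_one (mul_nonneg hε.le (Nat.cast_nonneg n))
      exact le_of_lt this
    have htle : (k + s : ℝ) ≤ γ * n + 1 := by
      simp only [hγdef]; push_cast; linarith
    have hmlb : β * n < (m : ℝ) := by
      have := Nat.lt_floor_add_one (β * n)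
      push_cast [hmdef]
      linarith [Nat.lt_succ_floor (β * n)]
    have hmub : (m : ℝ) ≤ β * n + 1 := by
      have : (⌊β * n⌋₊ : ℝ) ≤ β * n := Nat.floor_le (mul_nonneg (by linarith) (Nat.cast_nonneg n))
      push_cast [hmdef]; linarith
    -- t ≤ m and t + m ≤ n + 1
    have htm : k + s ≤ m := by
      have hreal : (k : ℝ) + (s : ℝ) ≤ (m : ℝ) := by linarith
      exact_mod_cast hreal
    have htm2 : (k + s) + m ≤ n + 1 := by
      have hreal : (k : ℝ) + (s : ℝ) + (m : ℝ) ≤ (n : ℝ) + 1 := by linarith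
      exact_mod_cast hreal
    -- growth condition
    have hgrow : ∀ i, k ≤ i → i < k + s → c * (i + 1) ≤ (n : ℝ) - i := by
      intro i hik his
      have hiub : (i : ℝ) + 1 ≤ γ * n + 1 := by
        have h' : (i : ℝ) + 1 ≤ (k : ℝ) + (s : ℝ) := by exact_mod_cast his
        linarith
      have hi2 : (i : ℝ) ≤ γ * n := by linarith
      calc c * ((i : ℝ) + 1) ≤ c * (γ * n + 1) := by
            apply mul_le_mul_of_nonneg_left hiub hc0
        _ = c * γ * n + c := by ring
        _ ≤ (n : ℝ) - γ * n := by nlinarith [h3]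
        _ ≤ (n : ℝ) - i := by linarith
    -- choose chain
    have hmain : (c : ℝ) ^ s * (n.choose k : ℝ) ≤ (((n + 1).choose m : ℕ) : ℝ) := by
      have step1 : (c : ℝ) ^ s * (n.choose k : ℝ) ≤ (n.choose (k + s) : ℝ) :=
        my_choose_geom hc0 n k s hgrow
      have step2 : n.choose (k + s) ≤ (n + 1).choose (k + s) :=
        Nat.choose_le_choose _ (Nat.le_succ n)
      have step3 : (n + 1).choose (k + s) ≤ (n + 1).choose m :=
        my_choose_mono htm htm2
      calc (c : ℝ) ^ s * (n.choose k : ℝ) ≤ (n.choose (k + s) : ℝ) := step1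
        _ ≤ (((n + 1).choose m : ℕ) : ℝ) := by exact_mod_cast step2.trans step3
    have hchoosekpos : (0 : ℝ) < (n.choose k : ℝ) := by
      have hkn : k ≤ n := by
        have : (k : ℝ) ≤ α * n := hkle
        have : (k : ℝ) ≤ (n : ℝ) := by nlinarith
        exact_mod_cast this
      exact_mod_cast Nat.choose_pos hkn
    have hcs : (0 : ℝ) < c ^ s := pow_pos (by linarith) s
    have hden : (0 : ℝ) < (((n + 1).choose m : ℕ) : ℝ) := lt_of_lt_of_le (by positivity) hmain
    -- conclude the bound
    have hfrac : ((β - α) * n * (n.choose k : ℝ)) / (((n + 1).choose m : ℕ) : ℝ)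
        ≤ (β - α) * n / c ^ s := by
      rw [div_le_div_iff₀ hden hcs]
      calc (β - α) * n * (n.choose k : ℝ) * c ^ s
          = (β - α) * n * (c ^ s * (n.choose k : ℝ)) := by ring
        _ ≤ (β - α) * n * (((n + 1).choose m : ℕ) : ℝ) := by
            apply mul_le_mul_of_nonneg_left hmain
            apply mul_nonneg (by linarith) (by positivity)
    have hpow : ((n : ℝ)) / c ^ s ≤ (n : ℝ) * r ^ n := by
      have hεns : (ε * n : ℝ) ≤ (s : ℝ) := Nat.le_ceil _
      have hcpos : (0 : ℝ) < c := by linarith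
      have hrn : r ^ n = c ^ (-(ε * (n : ℝ))) := by
        rw [hrdef, ← Real.rpow_natCast (c ^ (-ε)) n, ← Real.rpow_mul hcpos.le]
        ring_nf
      have h5 : (1 : ℝ) ≤ r ^ n * c ^ s := by
        have e1 : (c : ℝ) ^ s = c ^ ((s : ℕ) : ℝ) := (Real.rpow_natCast c s).symm
        rw [hrn, e1, ← Real.rpow_add hcpos]
        have : (0 : ℝ) ≤ -(ε * (n : ℝ)) + ((s : ℕ) : ℝ) := by linarith
        calc (1 : ℝ) = c ^ (0 : ℝ) := (Real.rpow_zero c).symm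
          _ ≤ c ^ (-(ε * (n : ℝ)) + ((s : ℕ) : ℝ)) :=
              Real.rpow_le_rpow_of_exponent_le hc1.le this
      rw [div_le_iff₀ hcs]
      have hn0' : (0 : ℝ) ≤ (n : ℝ) := Nat.cast_nonneg n
      nlinarith [mul_le_mul_of_nonneg_left h5 hn0']
    calc ((β - α) * n * (n.choose k : ℝ)) / (((n + 1).choose m : ℕ) : ℝ)
        ≤ (β - α) * n / c ^ s := hfrac
      _ = (β - α) * ((n : ℝ) / c ^ s) := by ring
      _ ≤ (β - α) * ((n : ℝ) * r ^ n) := by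
          apply mul_le_mul_of_nonneg_left hpow (by linarith)
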